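/- Let G be an n-vertex graph, A ⊆ V(G), and R' ⊆ V(G)\A. Define X^1 := { v ∈ X : |N(v)∩R'| = 1 } and X^{2+} := { v ∈ X : |N(v)∩R'| ≥ 2 } for X ⊆ A. Suppose X, W ⊆ A satisfy X^{2+} ≡_A^n W^{2+} and |E(G[X])| − |X \ X^1| = |E(G[W])| − |W \ W^1|. Then for every Y ⊆ V(G)\A with Y ≡_{V(G)\A}^2 R', if G[X ∪ Y] is a tree and G[W ∪ Y] is connected, then G[W ∪ Y] is a tree. -/

import Mathlib

open SimpleGraph Finset

/-- `X` and `Y` are `d`-neighbor equivalent over `A` in `G`. -/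
def nequiv {V : Type*} [Fintype V] [DecidableEq V] (G : SimpleGraph V) [DecidableRel G.Adj]
    (d : ℕ) (A X Y : Finset V) : Prop :=
  ∀ u ∉ A, min d (G.neighborFinset u ∩ X).card = min d (G.neighborFinset u ∩ Y).card

/-- The set of edges of `G` with both endpoints in `S`. -/
def edgesWithin {V : Type*} [Fintype V] [DecidableEq V] (G : SimpleGraph V)
    [DecidableRel G.Adj] (S : Finset V) : Finset (Sym2 V) :=
  G.edgeFinset.filter (fun e => ∃ x ∈ S, ∃ y ∈ S, e = s(x, y))

lemma aux_conn_card_le {V : Type*} [Fintype V] (G : SimpleGraph V)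
    (h : G.Connected) {i : Fintype G.edgeSet} :
    Fintype.card V ≤ (@SimpleGraph.edgeFinset _ G i).card + 1 := by
  classical
  have hne : Nonempty V := h.nonempty
  inhabit V
  set r : V := default
  have key : ∀ v : V, v ≠ r → ∃ w : V, G.Adj v w ∧ G.dist w r + 1 = G.dist v r := by
    intro v hv
    obtain ⟨p, hp⟩ := h.exists_walk_length_eq_dist v r
    obtain ⟨w, hadj, q, rfl⟩ := Walk.exists_eq_cons_of_ne hv p
    refine ⟨w, hadj, ?_⟩
    have h1 : G.dist w r ≤ q.length := dist_le q
    have h2 : G.dist v r ≤ G.dist w r + 1 := by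
      obtain ⟨q', hq'⟩ := h.exists_walk_length_eq_dist w r
      have := dist_le (Walk.cons hadj q')
      simpa [hq', Nat.add_comm] using this
    simp only [Walk.length_cons] at hp
    omega
  choose g hg1 hg2 using key
  have hcard : ({r} : Finset V)ᶜ.card ≤ (@SimpleGraph.edgeFinset _ G i).card := by
    apply Finset.card_le_card_of_injOn (fun v => if hv : v = r then s(r, r) else s(v, g v hv))
    · intro v hv
      simp only [Finset.coe_compl, Set.mem_compl_iff, Finset.mem_coe, Finset.mem_singleton] at hv ⊢
      rw [dif_neg hv]
      simpa [mem_edgeFinset] using hg1 v hv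
    · intro a ha b hb hab
      simp only [Finset.coe_compl, Set.mem_compl_iff, Finset.mem_coe, Finset.mem_singleton] at ha hb
      simp only [dif_neg ha, dif_neg hb, Sym2.eq_iff] at hab
      rcases hab with ⟨h1, _⟩ | ⟨h1, h2⟩
      · exact h1
      · exfalso
        have e1 := hg2 a ha
        have e2 := hg2 b hb
        rw [h2] at e1
        rw [← h1] at e2
        omega
  have hcc : ({r} : Finset V)ᶜ.card = Fintype.card V - 1 := by
    rw [Finset.card_compl, Finset.card_singleton]
  have hpos : 1 ≤ Fintype.card V := Fintype.card_pos
  omega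

lemma aux_isTree_of_card {V : Type*} [Fintype V] (G : SimpleGraph V)
    (h : G.Connected) {i : Fintype G.edgeSet}
    (hc : (@SimpleGraph.edgeFinset _ G i).card + 1 = Fintype.card V) : G.IsTree := by
  classical
  refine ⟨h, ?_⟩
  by_contra hac
  rw [isAcyclic_iff_forall_edge_isBridge] at hac
  push_neg at hac
  obtain ⟨e, he, hbr⟩ := hac
  revert he hbr
  refine Sym2.ind (fun u v => ?_) e
  intro he hbr
  rw [mem_edgeSet] at he
  rw [isBridge_iff] at hbr
  push_neg at hbr
  have hreach : (G \ fromEdgeSet {s(u, v)}).Reachable u v := hbr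
  set G' := G \ fromEdgeSet {s(u, v)} with hG'
  have step : ∀ {a c : V}, G.Adj a c → G'.Reachable a c := by
    intro a c hac2
    by_cases hsym : s(a, c) = s(u, v)
    · rw [Sym2.eq_iff] at hsym
      rcases hsym with ⟨rfl, rfl⟩ | ⟨rfl, rfl⟩
      · exact hreach
      · exact hreach.symm
    · refine Adj.reachable ?_
      rw [hG', sdiff_adj, fromEdgeSet_adj]
      exact ⟨hac2, by simp [hsym]⟩
  have walkstep : ∀ {a b : V} (_ : G.Walk a b), G'.Reachable a b := by
    intro a b p
    induction p with
    | nil => exact Reachable.refl _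
    | cons hadj q ih => exact (step hadj).trans ih
  have hconn' : G'.Connected := by
    rw [connected_iff]
    exact ⟨fun a b => (h.preconnected a b).elim (fun p => walkstep p), h.nonempty⟩
  have hmem : s(u, v) ∈ (@SimpleGraph.edgeFinset _ G i) := by
    rw [mem_edgeFinset, mem_edgeSet]; exact he
  have key : ∀ (j : Fintype G'.edgeSet),
      (@SimpleGraph.edgeFinset _ G' j).card = (@SimpleGraph.edgeFinset _ G i).card - 1 := by
    intro j
    have hes : (@SimpleGraph.edgeFinset _ G' j) = (@SimpleGraph.edgeFinset _ G i).erase s(u, v) := by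
      ext e
      simp only [mem_edgeFinset, Finset.mem_erase, hG', edgeSet_sdiff, edgeSet_fromEdgeSet,
        edgeSet_sdiff_sdiff_isDiag, Set.mem_diff, Set.mem_singleton_iff]
      tauto
    rw [hes, Finset.card_erase_of_mem hmem]
  have hle := aux_conn_card_le G' hconn' (i := SimpleGraph.fintypeEdgeSet G')
  rw [key _] at hle
  have hpos : 1 ≤ (@SimpleGraph.edgeFinset _ G i).card := Finset.card_pos.2 ⟨_, hmem⟩
  omega

lemma aux_card_coe {V : Type*} [Fintype V] (S : Finset V) {i : Fintype ((S : Set V) : Type _)} :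
    @Fintype.card _ i = S.card := by
  classical
  exact (Fintype.card_congr (Equiv.subtypeEquivRight (fun x => by simp))).trans
    (Fintype.card_coe S)

lemma aux_card_edgesWithin {V : Type*} [Fintype V] [DecidableEq V] (G : SimpleGraph V)
    [DecidableRel G.Adj] (S : Finset V) {i : Fintype (G.induce ((S : Set V))).edgeSet} :
    (@SimpleGraph.edgeFinset _ (G.induce ((S : Set V))) i).card = (edgesWithin G S).card := by
  classical
  apply Finset.card_bij (fun e _ => Sym2.map Subtype.val e)
  · intro e he
    induction e with
    | _ a b =>
      rw [mem_edgeFinset, mem_edgeSet] at he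
      simp only [Sym2.map_pair_eq]
      rw [edgesWithin, Finset.mem_filter, mem_edgeFinset, mem_edgeSet]
      exact ⟨he, a.1, a.2, b.1, b.2, rfl⟩
  · intro e₁ h₁ e₂ h₂ h
    exact Sym2.map.injective Subtype.val_injective h
  · intro e he
    rw [edgesWithin, Finset.mem_filter, mem_edgeFinset] at he
    obtain ⟨hadj, x, hx, y, hy, rfl⟩ := he
    rw [mem_edgeSet] at hadj
    refine ⟨s(⟨x, hx⟩, ⟨y, hy⟩), ?_, by simp⟩
    rw [mem_edgeFinset, mem_edgeSet]
    exact hadj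

lemma aux_handshake {V : Type*} [Fintype V] [DecidableEq V] (G : SimpleGraph V)
    [DecidableRel G.Adj] (S : Finset V) :
    ∑ v ∈ S, (G.neighborFinset v ∩ S).card = 2 * (edgesWithin G S).card := by
  classical
  rw [← aux_card_edgesWithin G S (i := SimpleGraph.fintypeEdgeSet _),
    ← sum_degrees_eq_twice_card_edges]
  rw [← Finset.sum_coe_sort S (fun v => (G.neighborFinset v ∩ S).card)]
  apply Finset.sum_congr rfl
  intro v _
  rw [eq_comm]
  apply Finset.card_bij (fun (u : {x // x ∈ (S : Set V)}) _ => (u : V))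
  · intro u hu
    rw [mem_neighborFinset] at hu
    simp only [Finset.mem_inter, mem_neighborFinset]
    exact ⟨hu, u.2⟩
  · intro a _ b _ h
    exact Subtype.val_injective h
  · intro w hw
    simp only [Finset.mem_inter, mem_neighborFinset] at hw
    exact ⟨⟨w, hw.2⟩, by rw [mem_neighborFinset]; exact hw.1, rfl⟩

lemma aux_swap {V : Type*} [Fintype V] [DecidableEq V] (G : SimpleGraph V)
    [DecidableRel G.Adj] (X Y : Finset V) :
    ∑ v ∈ X, (G.neighborFinset v ∩ Y).card = ∑ u ∈ Y, (G.neighborFinset u ∩ X).card := by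
  have h : ∀ (B : Finset V) (v : V), (G.neighborFinset v ∩ B).card
      = ∑ u ∈ B, if G.Adj v u then 1 else 0 := by
    intro B v
    rw [Finset.inter_comm, ← Finset.card_filter]
    congr 1
    ext u
    simp [mem_neighborFinset, adj_comm]
  calc ∑ v ∈ X, (G.neighborFinset v ∩ Y).card
      = ∑ v ∈ X, ∑ u ∈ Y, if G.Adj v u then 1 else 0 :=
        Finset.sum_congr rfl (fun v _ => h Y v)
    _ = ∑ u ∈ Y, ∑ v ∈ X, if G.Adj v u then 1 else 0 := Finset.sum_comm
    _ = ∑ u ∈ Y, (G.neighborFinset u ∩ X).card := by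
        refine Finset.sum_congr rfl (fun u _ => ?_)
        rw [h X u]
        exact Finset.sum_congr rfl (fun v _ => by simp [adj_comm])

/-- Suppose `X, W ⊆ A` satisfy `X^{2+} ≡_A^n W^{2+}` and
`|E(G[X])| − |X \ X^1| = |E(G[W])| − |W \ W^1|`. Then for every `Y ⊆ Ā` with
`Y ≡_{Ā}^2 R'`, if `G[X ∪ Y]` is a tree and `G[W ∪ Y]` is connected, then `G[W ∪ Y]`
is a tree. -/
theorem tree_of_connected_of_equiv {V : Type*} [Fintype V] [DecidableEq V]
    (G : SimpleGraph V) [DecidableRel G.Adj] (A X W R' : Finset V)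
    (hX : X ⊆ A) (hW : W ⊆ A) (hR' : R' ⊆ Aᶜ)
    (h2p : nequiv G (Fintype.card V) A
      (X.filter (fun v => 2 ≤ (G.neighborFinset v ∩ R').card))
      (W.filter (fun v => 2 ≤ (G.neighborFinset v ∩ R').card)))
    (hedges : ((edgesWithin G X).card : ℤ) -
        ((X \ X.filter (fun v => (G.neighborFinset v ∩ R').card = 1)).card : ℤ) =
      ((edgesWithin G W).card : ℤ) -
        ((W \ W.filter (fun v => (G.neighborFinset v ∩ R').card = 1)).card : ℤ))
    (Y : Finset V) (hY : Y ⊆ Aᶜ) (heq : nequiv G 2 Aᶜ Y R')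
    (htree : (G.induce ((X ∪ Y : Finset V) : Set V)).IsTree)
    (hconn : (G.induce ((W ∪ Y : Finset V) : Set V)).Connected) :
    (G.induce ((W ∪ Y : Finset V) : Set V)).IsTree := by
  classical
  -- per-vertex consequences of heq
  have pervertex : ∀ v ∈ A, (G.neighborFinset v ∩ Y).card =
      (if (G.neighborFinset v ∩ R').card = 1 then 1 else 0) +
      (if 2 ≤ (G.neighborFinset v ∩ R').card then (G.neighborFinset v ∩ Y).card else 0) := by
    intro v hv
    have hmin := heq v (by simp [Finset.mem_compl, hv])
    split_ifs with h1 h2 <;> omega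
  -- disjointness
  have hdisj : ∀ {Z : Finset V}, Z ⊆ A → Disjoint Z Y := by
    intro Z hZ
    rw [Finset.disjoint_left]
    intro a haZ haY
    exact (Finset.mem_compl.1 (hY haY)) (hZ haZ)
  -- cross-edge count decomposition
  have crossdec : ∀ (Z : Finset V), Z ⊆ A → ∑ v ∈ Z, (G.neighborFinset v ∩ Y).card =
      (Z.filter (fun v => (G.neighborFinset v ∩ R').card = 1)).card +
      ∑ v ∈ Z.filter (fun v => 2 ≤ (G.neighborFinset v ∩ R').card),
        (G.neighborFinset v ∩ Y).card := by
    intro Z hZ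
    rw [Finset.sum_congr rfl (fun v hv => pervertex v (hZ hv)), Finset.sum_add_distrib,
      ← Finset.card_filter, ← Finset.sum_filter]
  -- the common cross sum over 2+ vertices
  have Teq : ∑ v ∈ X.filter (fun v => 2 ≤ (G.neighborFinset v ∩ R').card),
        (G.neighborFinset v ∩ Y).card
      = ∑ v ∈ W.filter (fun v => 2 ≤ (G.neighborFinset v ∩ R').card),
        (G.neighborFinset v ∩ Y).card := by
    rw [aux_swap G _ Y, aux_swap G _ Y]
    refine Finset.sum_congr rfl (fun u hu => ?_)
    have hu' : u ∉ A := Finset.mem_compl.1 (hY hu)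
    have h := h2p u hu'
    have b1 : (G.neighborFinset u ∩
        X.filter (fun v => 2 ≤ (G.neighborFinset v ∩ R').card)).card ≤ Fintype.card V := by
      rw [← Finset.card_univ]; exact Finset.card_le_univ _
    have b2 : (G.neighborFinset u ∩
        W.filter (fun v => 2 ≤ (G.neighborFinset v ∩ R').card)).card ≤ Fintype.card V := by
      rw [← Finset.card_univ]; exact Finset.card_le_univ _
    omega
  -- edge count of unions
  have unioncount : ∀ (Z : Finset V), Z ⊆ A →
      2 * (edgesWithin G (Z ∪ Y)).card =
      2 * (edgesWithin G Z).card + 2 * (edgesWithin G Y).card +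
      2 * ∑ v ∈ Z, (G.neighborFinset v ∩ Y).card := by
    intro Z hZ
    have h1 := aux_handshake G (Z ∪ Y)
    rw [Finset.sum_union (hdisj hZ)] at h1
    have expand : ∀ v : V, (G.neighborFinset v ∩ (Z ∪ Y)).card =
        (G.neighborFinset v ∩ Z).card + (G.neighborFinset v ∩ Y).card := by
      intro v
      rw [Finset.inter_union_distrib_left, Finset.card_union_of_disjoint
        ((hdisj hZ).mono Finset.inter_subset_right Finset.inter_subset_right)]
    simp_rw [expand] at h1
    rw [Finset.sum_add_distrib, Finset.sum_add_distrib] at h1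
    have h2 := aux_handshake G Z
    have h3 := aux_handshake G Y
    have h4 := aux_swap G Y Z
    omega
  have hXcount := unioncount X hX
  have hWcount := unioncount W hW
  have hXdec := crossdec X hX
  have hWdec := crossdec W hW
  -- vertex/edge count from the tree hypothesis
  have htc := htree.card_edgeFinset
  rw [aux_card_edgesWithin G (X ∪ Y), aux_card_coe,
    Finset.card_union_of_disjoint (hdisj hX)] at htc
  -- sdiff cardinalities
  have hXsd : (X \ X.filter (fun v => (G.neighborFinset v ∩ R').card = 1)).card
      = X.card - (X.filter (fun v => (G.neighborFinset v ∩ R').card = 1)).card :=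
    Finset.card_sdiff_of_subset (Finset.filter_subset _ _)
  have hWsd : (W \ W.filter (fun v => (G.neighborFinset v ∩ R').card = 1)).card
      = W.card - (W.filter (fun v => (G.neighborFinset v ∩ R').card = 1)).card :=
    Finset.card_sdiff_of_subset (Finset.filter_subset _ _)
  have hX1le : (X.filter (fun v => (G.neighborFinset v ∩ R').card = 1)).card ≤ X.card :=
    Finset.card_le_card (Finset.filter_subset _ _)
  have hW1le : (W.filter (fun v => (G.neighborFinset v ∩ R').card = 1)).card ≤ W.card :=
    Finset.card_le_card (Finset.filter_subset _ _)
  -- conclude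
  letI iW : Fintype (G.induce ((W ∪ Y : Finset V) : Set V)).edgeSet := Fintype.ofFinite _
  refine aux_isTree_of_card (i := iW) _ hconn ?_
  rw [aux_card_edgesWithin G (W ∪ Y), aux_card_coe,
    Finset.card_union_of_disjoint (hdisj hW)]
  omega
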